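/- Elementary cellular automaton rule 9 is not Von Neumann regular in the monoid of cellular automata on {0,1}^ℤ. -/

import Mathlib

/-- ECA rule 9 (`f(x)_i = 1` iff `x_{i-1} x_i x_{i+1} ∈ {000, 011}`) is not Von
Neumann regular in the monoid of cellular automata (shift-commuting continuous
self-maps) of `{0,1}^ℤ`. -/
theorem stmt_11
    (f : (ℤ → Bool) → (ℤ → Bool))
    (hf : ∀ x i, f x i = (!(x (i - 1)) && (x i == x (i + 1)))) :
    ¬ ∃ g : (ℤ → Bool) → (ℤ → Bool),
        Continuous g ∧
        (∀ x : ℤ → Bool, g (fun i => x (i + 1)) = fun i => g x (i + 1)) ∧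
        ∀ x, f (g (f x)) = f x := by
  rintro ⟨g, hg_cont, hg_shift, hgf⟩
  -- the witness configuration x, with f x = 1 exactly on {-2, -1}
  set x : ℤ → Bool := fun i => if i ≤ -3 then decide (i % 2 = 0) else if i ≤ 0 then false else decide (i % 2 = 1) with hxdef
  have hy : ∀ i : ℤ, f x i = decide (i = -2 ∨ i = -1) := by
    intro i
    rw [hf]
    simp only [hxdef]
    by_cases h4 : i ≤ -4
    · rw [if_pos (by omega : i - 1 ≤ -3), if_pos (by omega : i ≤ -3), if_pos (by omega : i + 1 ≤ -3)]
      rcases (by omega : i % 2 = 0 ∨ i % 2 = 1) with h | h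
      · simp [h, (by omega : (i + 1) % 2 = 1), (by omega : ¬(i = -2 ∨ i = -1))]; omega
      · simp [h, (by omega : (i + 1) % 2 = 0), (by omega : ¬(i = -2 ∨ i = -1))]; omega
    · by_cases h3 : i = -3
      · subst h3; norm_num
      · by_cases h2 : i = -2
        · subst h2; norm_num
        · by_cases h1 : i = -1
          · subst h1; norm_num
          · by_cases h0 : i = 0
            · subst h0; norm_num
            · rw [if_neg (by omega : ¬ i - 1 ≤ -3), if_neg (by omega : ¬ i ≤ -3),
                if_neg (by omega : ¬ i ≤ 0), if_neg (by omega : ¬ i + 1 ≤ -3),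
                if_neg (by omega : ¬ i + 1 ≤ 0)]
              by_cases hii : i = 1
              · subst hii; norm_num
              · rw [if_neg (by omega : ¬ i - 1 ≤ 0)]
                rcases (by omega : i % 2 = 0 ∨ i % 2 = 1) with h | h
                · simp [h, (by omega : (i + 1) % 2 = 1), (by omega : ¬(i = -2 ∨ i = -1))]; omega
                · simp [h, (by omega : (i + 1) % 2 = 0), (by omega : ¬(i = -2 ∨ i = -1))]; omega
  -- g commutes with iterated shifts
  have key : ∀ (n : ℕ) (u : ℤ → Bool), g (fun i => u (i + n)) = fun i => g u (i + n) := by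
    intro n
    induction n with
    | zero => intro u; simp
    | succ n ih =>
        intro u
        have e1 : (fun i : ℤ => u (i + (n + 1 : ℕ))) = (fun i : ℤ => (fun j : ℤ => u (j + 1)) (i + n)) := by
          funext i; push_cast; ring_nf
        rw [e1, ih (fun j => u (j + 1)), hg_shift u]
        funext i; push_cast; ring_nf
  -- w := g(0^ℤ) is constant
  set w : ℤ → Bool := g (fun _ => false) with hwdef
  have hwshift : ∀ i, w i = w (i + 1) := by
    intro i
    have h0 : (fun i : ℤ => (fun _ : ℤ => false) (i + 1)) = (fun _ : ℤ => false) := rfl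
    have := hg_shift (fun _ => false)
    rw [h0] at this
    rw [← hwdef] at this
    exact congrFun this i
  have hwconst : ∀ i : ℤ, w i = w 0 := by
    intro i
    induction i using Int.induction_on with
    | zero => rfl
    | succ n ih => rw [← hwshift]; exact ih
    | pred n ih => rw [hwshift (-(n:ℤ) - 1)]; simpa using ih
  have hfw : f w = fun _ => false := by
    have h1 : f (fun _ => true) = fun _ : ℤ => false := by
      funext i; rw [hf]; simp
    have h2 := hgf (fun _ => true)
    rw [h1] at h2
    exact h2
  have hw0 : w 0 = true := by
    by_contra h
    have h' : w 0 = false := by simpa using h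
    have := congrFun hfw 0
    rw [hf] at this
    rw [hwconst (0 - 1), hwconst (0 + 1), h'] at this
    simp at this
  -- z := g (f x)
  set z : ℤ → Bool := g (f x) with hzdef
  have hfz : ∀ i : ℤ, (!(z (i - 1)) && (z i == z (i + 1))) = decide (i = -2 ∨ i = -1) := by
    intro i
    rw [← hf, hzdef, hgf x, hy]
  -- z 0 = false
  have hm2 := hfz (-2)
  have hm1 := hfz (-1)
  norm_num at hm2 hm1
  -- hm2 : z (-3) = false ∧ z (-2) = z (-1), hm1 : z (-2) = false ∧ z (-1) = z 0
  have hz0 : z 0 = false := by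
    rcases hm2 with ⟨_, e2⟩
    rcases hm1 with ⟨e3, e4⟩
    rw [← e4, ← e2, e3]
  -- continuity: z n = true for all large n
  have htail : ∃ N : ℕ, ∀ n : ℕ, N ≤ n → z (n : ℤ) = true := by
    have h1 : Filter.Tendsto (fun n : ℕ => (fun i : ℤ => f x (i + n))) Filter.atTop (nhds (fun _ => false)) := by
      rw [tendsto_pi_nhds]
      intro i
      have hev : (fun n : ℕ => f x (i + n)) =ᶠ[Filter.atTop] (fun _ => false) := by
        rw [Filter.EventuallyEq, Filter.eventually_atTop]
        refine ⟨i.natAbs + 3, fun n hn => ?_⟩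
        rw [hy]
        simp only [decide_eq_false_iff_not]
        omega
      exact Filter.Tendsto.congr' hev.symm tendsto_const_nhds
    have h2 := (hg_cont.tendsto (fun _ => false)).comp h1
    have h3 := ((continuous_apply (0 : ℤ)).tendsto w).comp h2
    have h4 : Filter.Tendsto (fun n : ℕ => z (n : ℤ)) Filter.atTop (nhds true) := by
      rw [← hw0]
      apply h3.congr
      intro n
      show g (fun i => f x (i + n)) 0 = z (n : ℤ)
      rw [key n (f x)]
      simp [hzdef]
    have h5 : ∀ᶠ n : ℕ in Filter.atTop, z (n : ℤ) = true := by
      have : nhds (true : Bool) = pure true := by rw [nhds_discrete]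
      rw [this, Filter.tendsto_pure] at h4
      exact h4
    exact Filter.eventually_atTop.mp h5
  obtain ⟨N, hN⟩ := htail
  -- the greatest n ≤ N with z n = false
  set P : ℕ → Prop := fun n => z (n : ℤ) = false with hPdef
  have hP0 : P 0 := hz0
  set M : ℕ := Nat.findGreatest P N with hMdef
  have hPM : P M := Nat.findGreatest_spec (Nat.zero_le _) hP0
  have hMleN : M ≤ N := Nat.findGreatest_le N
  have hMN : M < N := by
    rcases eq_or_lt_of_le hMleN with h | h
    · exfalso
      have h1 : z (N : ℤ) = true := hN N le_rfl
      have h2 : z (N : ℤ) = false := h ▸ hPM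
      rw [h1] at h2
      simp at h2
    · exact h
  have hz1 : z ((M : ℤ) + 1) = true := by
    have : ¬ P (M + 1) := Nat.findGreatest_is_greatest (Nat.lt_succ_self M) (by omega)
    simp only [hPdef, Bool.not_eq_false] at this
    push_cast at this ⊢
    exact this
  have hz2 : z ((M : ℤ) + 2) = true := by
    rcases Nat.lt_or_ge N (M + 2) with h | h
    · have := hN (M + 2) (by omega)
      push_cast at this ⊢
      exact this
    · have : ¬ P (M + 2) := Nat.findGreatest_is_greatest (by omega) h
      simp only [hPdef, Bool.not_eq_false] at this
      push_cast at this ⊢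
      exact this
  -- contradiction at index M + 1
  have hcon := hfz ((M : ℤ) + 1)
  have hzM : z ((M : ℤ)) = false := hPM
  rw [(by ring : (M : ℤ) + 1 - 1 = (M : ℤ)), hzM, hz1,
    (by ring : (M : ℤ) + 1 + 1 = (M : ℤ) + 2), hz2] at hcon
  norm_num at hcon
  omega
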